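/- Let Q, Q̂ : ℝⁿ → ℝ be nonnegative functionals and c a constant such that (1−ε)(Q(x) − c) ≤ Q̂(x) ≤ (1+ε)(Q(x) − c) for all x in a subspace 𝒵, where 0 ≤ ε < 1 and Q(x) − c ≥ 0 on 𝒵. Let x₋, x ∈ 𝒵 with Q̂(x) ≤ Q̂(x₋), Q̂(x) > 0, and set Δ = Q̂(x₋) − Q̂(x). If Δ / Q̂(x) ≥ 2ε/(1−ε), then Q(x₋) ≥ Q(x). -/
import Mathlib


/-- Core inequality of Proposition 1: monotonicity of the exact functional under
sketching distortion, given a sufficient relative decrease of the sketched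
functional. -/
theorem sketched_sufficient_decrease
    {n : ℕ} (Q Qh : (Fin n → ℝ) → ℝ) (c ε : ℝ)
    (𝒵 : Submodule ℝ (Fin n → ℝ))
    (hε0 : 0 ≤ ε) (hε1 : ε < 1)
    (hQnn : ∀ x ∈ 𝒵, 0 ≤ Q x - c)
    (hdist : ∀ x ∈ 𝒵, (1 - ε) * (Q x - c) ≤ Qh x ∧ Qh x ≤ (1 + ε) * (Q x - c))
    (xm x : Fin n → ℝ) (hxm : xm ∈ 𝒵) (hx : x ∈ 𝒵)
    (hle : Qh x ≤ Qh xm) (hpos : 0 < Qh x)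
    (hdec : (Qh xm - Qh x) / Qh x ≥ 2 * ε / (1 - ε)) :
    Q xm ≥ Q x := by
  obtain ⟨h1m, h2m⟩ := hdist xm hxm
  obtain ⟨h1x, h2x⟩ := hdist x hx
  have hQx := hQnn x hx
  have hQm := hQnn xm hxm
  have h1ε : (0:ℝ) < 1 - ε := by linarith
  rw [ge_iff_le, div_le_div_iff₀ h1ε hpos] at hdec
  -- hdec : 2*ε*Qh x ≤ (Qh xm - Qh x)*(1-ε)
  have hε1' : (0:ℝ) < 1 + ε := by linarith
  have A : (1 - ε) * Qh xm ≤ (1 - ε) * ((1 + ε) * (Q xm - c)) :=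
    mul_le_mul_of_nonneg_left h2m h1ε.le
  have B : (1 + ε) * ((1 - ε) * (Q x - c)) ≤ (1 + ε) * Qh x :=
    mul_le_mul_of_nonneg_left h1x hε1'.le
  nlinarith [mul_pos h1ε hε1']
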